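/- Let D be the directed path on vertices {1,2,3} with arcs (1,2) and (2,3). A strategy R for Rei in the semi-restricted D-game is optimal if and only if R(r)_3 = 1/2 for every restriction vector r such that 3 ∈ supp(r) and supp(r) ≠ {3}. -/

import Mathlib

open Finset

/-- A digraph: finite vertex set, no loops, at most one arc per pair. -/
structure Digraph' (V : Type) where
  Adj : V → V → Bool
  irrefl : ∀ v, Adj v v = false
  asymm : ∀ u v, Adj u v = true → Adj v u = false

namespace Digraph'

variable {V : Type} [Fintype V] [DecidableEq V] (D : Digraph' V)

/-- Out-neighborhood N⁺(v). -/
def outN (v : V) : Finset V := univ.filter fun u => D.Adj v u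
/-- In-neighborhood N⁻(v). -/
def inN (v : V) : Finset V := univ.filter fun u => D.Adj u v

/-- max over vertices v of Σ_{u∈N⁺(v)} p u − Σ_{u∈N⁻(v)} p u. -/
noncomputable def payoff (p : V → ℝ) : ℝ :=
  sSup (Set.range fun v => (∑ u ∈ D.outN v, p u) - ∑ u ∈ D.inN v, p u)

/-- Auxiliary (fuel-indexed) definition of the value of the semi-restricted D-game. -/
noncomputable def valueAux : ℕ → (V → ℕ) → ℝ
  | 0, _ => 0
  | (n+1), r =>
    if ∀ u, r u = 0 then 0
    else sInf { x : ℝ | ∃ p : V → ℝ, (∀ u, 0 ≤ p u) ∧ (∑ u, p u = 1) ∧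
      (∀ u, p u ≠ 0 → r u ≠ 0) ∧
      x = D.payoff p + ∑ u, p u * valueAux n (fun w => r w - if w = u then 1 else 0) }

/-- The value S_D(r) of the semi-restricted D-game with restriction vector r. -/
noncomputable def value (r : V → ℕ) : ℝ := D.valueAux (∑ u, r u) r

end Digraph'

/-- A strategy for Rei in the semi-restricted D-game. -/
structure ReiStrategy {V : Type} [Fintype V] [DecidableEq V] (D : Digraph' V) where
  play : (V → ℕ) → V → ℝ
  nonneg : ∀ r : V → ℕ, (¬ ∀ u, r u = 0) → ∀ u, 0 ≤ play r u
  sum_one : ∀ r : V → ℕ, (¬ ∀ u, r u = 0) → ∑ u, play r u = 1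
  supp : ∀ r : V → ℕ, (¬ ∀ u, r u = 0) → ∀ u, play r u ≠ 0 → r u ≠ 0

namespace Digraph'

variable {V : Type} [Fintype V] [DecidableEq V] (D : Digraph' V)

/-- Auxiliary (fuel-indexed) value of Rei's strategy R. -/
noncomputable def stratValueAux (R : ReiStrategy D) : ℕ → (V → ℕ) → ℝ
  | 0, _ => 0
  | (n+1), r =>
    if ∀ u, r u = 0 then 0
    else D.payoff (R.play r) +
      ∑ u, R.play r u * stratValueAux R n (fun w => r w - if w = u then 1 else 0)

/-- The value S_D(r; R) of Rei's strategy R at restriction vector r. -/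
noncomputable def stratValue (R : ReiStrategy D) (r : V → ℕ) : ℝ :=
  D.stratValueAux R (∑ u, r u) r

/-- A strategy for Rei is optimal if its value equals the game value at every restriction vector. -/
def IsOptimal (R : ReiStrategy D) : Prop := ∀ r : V → ℕ, D.stratValue R r = D.value r

/-- A strategy is oblivious if it only depends on the support of the restriction vector. -/
def IsOblivious (R : ReiStrategy D) : Prop :=
  ∀ r r' : V → ℕ, (∀ u, r u ≠ 0 ↔ r' u ≠ 0) → R.play r = R.play r'

/-- A digraph is oblivious if Rei has an oblivious optimal strategy. -/
def Oblivious : Prop := ∃ R : ReiStrategy D, D.IsOptimal R ∧ D.IsOblivious R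

/-- A tournament: exactly one arc between any two distinct vertices. -/
def IsTournament : Prop := ∀ u v : V, u ≠ v → (D.Adj u v = true ∨ D.Adj v u = true)

/-- Eulerian: every vertex has equal in- and out-degree. -/
def IsEulerian : Prop := ∀ v : V, (D.outN v).card = (D.inN v).card

/-- The skew adjacency matrix of a digraph. -/
def skewAdj : Matrix V V ℝ := fun u v =>
  if D.Adj u v then 1 else if D.Adj v u then -1 else 0

end Digraph'

/-- The directed path 0 → 1 → 2 on three vertices. -/
def P3 : Digraph' (Fin 3) where
  Adj i j := decide ((i = 0 ∧ j = 1) ∨ (i = 1 ∧ j = 2))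
  irrefl := by decide
  asymm := by decide


/- ### Auxiliary development ### -/

noncomputable def gP : ℕ → ℕ → ℝ
  | 0, c => c
  | _+1, 0 => 0
  | s+1, c+1 => (gP s (c+1) + gP (s+1) c) / 2

lemma gP_zero_left (c : ℕ) : gP 0 c = c := by simp [gP]

lemma gP_zero_right (s : ℕ) : gP s 0 = 0 := by
  cases s <;> simp [gP]

lemma gP_rec (s c : ℕ) : gP (s+1) (c+1) = (gP s (c+1) + gP (s+1) c) / 2 := by
  simp [gP]

lemma gP_c (s : ℕ) : ∀ c, 0 < gP s (c+1) - gP s c ∧ gP s (c+1) - gP s c ≤ 1 := by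
  induction s with
  | zero => intro c; rw [gP_zero_left, gP_zero_left]; push_cast; constructor <;> linarith
  | succ s ih =>
    intro c
    induction c with
    | zero =>
      have h := ih 0
      rw [gP_zero_right] at h ⊢
      constructor <;>
        linarith [h.1, h.2, gP_rec s 0, gP_zero_right (s+1), gP_zero_right s]
    | succ c ihc =>
      have h1 := ih (c+1)
      constructor <;> linarith [h1.1, h1.2, ihc.1, ihc.2, gP_rec s (c+1), gP_rec s c]

lemma gP_s (s : ℕ) : ∀ c, 0 ≤ gP s c - gP (s+1) c ∧ gP s c - gP (s+1) c < 1 := by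
  induction s with
  | zero =>
    intro c
    induction c with
    | zero => rw [gP_zero_left, gP_zero_right]; norm_num
    | succ c ihc =>
      have e1 : gP 1 (c+1) = (gP 0 (c+1) + gP 1 c) / 2 := gP_rec 0 c
      rw [gP_zero_left] at *
      push_cast at *
      constructor <;> linarith [ihc.1, ihc.2]
  | succ s ih =>
    intro c
    induction c with
    | zero => rw [gP_zero_right, gP_zero_right]; norm_num
    | succ c ihc =>
      have h1 := ih (c+1)
      constructor <;>
        linarith [h1.1, h1.2, ihc.1, ihc.2, gP_rec s c, gP_rec (s+1) c]

noncomputable def fabc (a b c : ℕ) : ℝ := gP (a + b) c + b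

lemma d_bounds (s c : ℕ) : 0 < gP s (c+1) - gP (s+1) c ∧ gP s (c+1) - gP (s+1) c < 2 := by
  have h1 := gP_c s c
  have h2 := gP_s s c
  constructor <;> linarith [h1.1, h1.2, h2.1, h2.2]

section core
variable (a b c : ℕ) (p0 p1 p2 : ℝ)

noncomputable def Eexp : ℝ :=
  max p1 (max (p2 - p0) (-p1)) + p0 * fabc (a-1) b c + p1 * fabc a (b-1) c
    + p2 * fabc a b (c-1)

variable (h0 : 0 ≤ p0) (h1 : 0 ≤ p1) (h2 : 0 ≤ p2)
  (hsum : p0 + p1 + p2 = 1)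
  (ha : a = 0 → p0 = 0) (hb : b = 0 → p1 = 0) (hc : c = 0 → p2 = 0)

include h0 h1 h2 hsum ha hb hc

set_option linter.unusedSectionVars false

lemma core_decomp (hcne : c ≠ 0) (hsne : a + b ≠ 0) :
    Eexp a b c p0 p1 p2 - fabc a b c
      = (max p1 (max (p2 - p0) (-p1)) - p1)
        + (1/2 - p2) * (gP (a+b-1) c - gP (a+b) (c-1)) := by
  obtain ⟨c', rfl⟩ : ∃ c', c = c' + 1 := ⟨c - 1, by omega⟩
  obtain ⟨s', hs⟩ : ∃ s', a + b = s' + 1 := ⟨a + b - 1, by omega⟩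
  have e0 : p0 * fabc (a-1) b (c'+1) = p0 * (gP s' (c'+1) + b) := by
    rcases Nat.eq_zero_or_pos a with h | h
    · rw [ha h]; ring
    · have : a - 1 + b = s' := by omega
      rw [fabc, this]
  have e1 : p1 * fabc a (b-1) (c'+1) = p1 * (gP s' (c'+1) + b - 1) := by
    rcases Nat.eq_zero_or_pos b with h | h
    · rw [hb h]; ring
    · have h3 : a + (b-1) = s' := by omega
      rw [fabc, h3]
      have : ((b - 1 : ℕ) : ℝ) = (b : ℝ) - 1 := by
        have : (1:ℕ) ≤ b := h
        push_cast [Nat.cast_sub this]; ring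
      rw [this]; ring
  have e2 : p2 * fabc a b (c'+1-1) = p2 * (gP (s'+1) c' + b) := by
    rw [fabc, hs]; norm_num
  have eF : fabc a b (c'+1) = (gP s' (c'+1) + gP (s'+1) c') / 2 + b := by
    rw [fabc, hs, gP_rec]
  rw [Eexp, e0, e1, e2, eF, hs]
  simp only [Nat.add_sub_cancel]
  linear_combination (gP s' (c'+1) + (b:ℝ)) * hsum

lemma core_main (hcne : c ≠ 0) (hsne : a + b ≠ 0) :
    (p2 ≠ 1/2 → fabc a b c < Eexp a b c p0 p1 p2) ∧
      (p2 = 1/2 → Eexp a b c p0 p1 p2 = fabc a b c) := by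
  have hD := core_decomp a b c p0 p1 p2 h0 h1 h2 hsum ha hb hc hcne hsne
  set M := max p1 (max (p2 - p0) (-p1)) with hM
  set d := gP (a+b-1) c - gP (a+b) (c-1) with hdd
  have hM1 : p1 ≤ M := le_max_left _ _
  have hM2 : p2 - p0 ≤ M := le_trans (le_max_left _ _) (le_max_right _ _)
  have hd : 0 < d ∧ d < 2 := by
    obtain ⟨c', rfl⟩ : ∃ c', c = c' + 1 := ⟨c - 1, by omega⟩
    obtain ⟨s', hs⟩ : ∃ s', a + b = s' + 1 := ⟨a + b - 1, by omega⟩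
    rw [hdd, hs]
    simpa using d_bounds s' c'
  constructor
  · intro hp2
    rcases lt_or_gt_of_ne hp2 with h | h
    · have : 0 < (1/2 - p2) * d := mul_pos (by linarith) hd.1
      linarith
    · have key : 0 < (2*p2 - 1) + (1/2 - p2)*d := by
        nlinarith [mul_pos (show (0:ℝ) < p2 - 1/2 by linarith)
          (show (0:ℝ) < 2 - d by linarith [hd.2])]
      linarith
  · intro hp2
    subst hp2
    have hp : (1:ℝ)/2 - p0 = p1 := by linarith
    have hMeq : M = p1 := by
      rw [hM, hp, max_eq_left (by linarith : -p1 ≤ p1), max_self]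
    rw [hMeq] at hD
    linarith

lemma core_iff (hcne : c ≠ 0) (hsne : a + b ≠ 0) :
    Eexp a b c p0 p1 p2 = fabc a b c ↔ p2 = 1/2 := by
  have h := core_main a b c p0 p1 p2 h0 h1 h2 hsum ha hb hc hcne hsne
  constructor
  · intro he
    by_contra hne
    exact absurd he (ne_of_gt (h.1 hne))
  · exact h.2

lemma core_eq_boring (hne : ¬ (a = 0 ∧ b = 0 ∧ c = 0)) (hbor : c = 0 ∨ a + b = 0) :
    Eexp a b c p0 p1 p2 = fabc a b c := by
  rcases hbor with hc0 | hs0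
  · subst hc0
    have hp2 : p2 = 0 := hc rfl
    have hMeq : max p1 (max (p2 - p0) (-p1)) = p1 := by
      rw [hp2]
      rw [max_eq_left (max_le (by linarith) (by linarith))]
    rw [Eexp, hMeq, hp2]
    have hf : fabc a b 0 = b := by rw [fabc, gP_zero_right]; ring
    have hf0 : fabc (a-1) b 0 = b := by rw [fabc, gP_zero_right]; ring
    rw [hf, hf0]
    rcases Nat.eq_zero_or_pos b with hb0 | hbpos
    · subst hb0
      rw [hb rfl]
      simp
    · have hf1 : fabc a (b-1) 0 = (b:ℝ) - 1 := by
        rw [fabc, gP_zero_right]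
        have : ((b - 1 : ℕ) : ℝ) = (b : ℝ) - 1 := by
          rw [Nat.cast_sub hbpos]; norm_num
        rw [this]; ring
      rw [hf1]
      have : p0 + p1 = 1 := by linarith
      nlinarith [this]
  · have ha0 : a = 0 := by omega
    have hb0 : b = 0 := by omega
    have hcpos : 0 < c := by
      rcases Nat.eq_zero_or_pos c with h | h
      · exact absurd ⟨ha0, hb0, h⟩ hne
      · exact h
    have hp0 : p0 = 0 := ha ha0
    have hp1 : p1 = 0 := hb hb0
    have hp2 : p2 = 1 := by linarith
    rw [Eexp, hp0, hp1, hp2, ha0, hb0]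
    have hM : max (0:ℝ) (max (1 - 0) (-0)) = 1 := by norm_num
    rw [hM]
    have h1' : fabc 0 0 (c-1) = (c:ℝ) - 1 := by
      rw [fabc, gP_zero_left]
      push_cast [Nat.cast_sub hcpos]
      ring
    have h2' : fabc 0 0 c = c := by rw [fabc, gP_zero_left]; norm_num
    rw [h1', h2']
    norm_num

lemma core_ge (hne : ¬ (a = 0 ∧ b = 0 ∧ c = 0)) :
    fabc a b c ≤ Eexp a b c p0 p1 p2 := by
  rcases Nat.eq_zero_or_pos c with hc0 | hcpos
  · exact le_of_eq (core_eq_boring a b c p0 p1 p2 h0 h1 h2 hsum ha hb hc hne (Or.inl hc0)).symm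
  · rcases Nat.eq_zero_or_pos (a + b) with hs0 | hspos
    · exact le_of_eq
        (core_eq_boring a b c p0 p1 p2 h0 h1 h2 hsum ha hb hc hne (Or.inr hs0)).symm
    · have h := core_main a b c p0 p1 p2 h0 h1 h2 hsum ha hb hc (by omega) (by omega)
      by_cases hp2 : p2 = 1/2
      · exact le_of_eq (h.2 hp2).symm
      · exact le_of_lt (h.1 hp2)
end core

/- ### Payoff of P3 ### -/

lemma sSup_range_fin3 (h : Fin 3 → ℝ) :
    sSup (Set.range h) = max (h 0) (max (h 1) (h 2)) := by
  have hr : Set.range h = {h 0, h 1, h 2} := by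
    ext x
    constructor
    · rintro ⟨v, rfl⟩; fin_cases v <;> simp
    · rintro (rfl | rfl | rfl) <;> exact ⟨_, rfl⟩
  rw [hr]
  rw [show ({h 0, h 1, h 2} : Set ℝ) = insert (h 0) (insert (h 1) {h 2}) from rfl]
  rw [csSup_insert (Set.Finite.bddAbove (by simp)) (by simp),
    csSup_insert (Set.Finite.bddAbove (by simp)) (by simp), csSup_singleton]

lemma P3_payoff (p : Fin 3 → ℝ) :
    P3.payoff p = max (p 1) (max (p 2 - p 0) (-(p 1))) := by
  rw [Digraph'.payoff, sSup_range_fin3]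
  rw [show P3.outN 0 = {1} from by decide, show P3.outN 1 = {2} from by decide,
    show P3.outN 2 = ∅ from by decide, show P3.inN 0 = ∅ from by decide,
    show P3.inN 1 = {0} from by decide, show P3.inN 2 = {1} from by decide]
  simp

/- ### The explicit value function ### -/

noncomputable def fP (r : Fin 3 → ℕ) : ℝ := fabc (r 0) (r 1) (r 2)

lemma fP_zero (r : Fin 3 → ℕ) (hz : ∀ u, r u = 0) : fP r = 0 := by
  rw [fP, hz 0, hz 1, hz 2, fabc, gP_zero_right]
  norm_num

lemma fP_sub0 (r : Fin 3 → ℕ) :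
    fP (fun w => r w - if w = (0 : Fin 3) then 1 else 0) = fabc (r 0 - 1) (r 1) (r 2) := by
  simp [fP]

lemma fP_sub1 (r : Fin 3 → ℕ) :
    fP (fun w => r w - if w = (1 : Fin 3) then 1 else 0) = fabc (r 0) (r 1 - 1) (r 2) := by
  simp [fP]

lemma fP_sub2 (r : Fin 3 → ℕ) :
    fP (fun w => r w - if w = (2 : Fin 3) then 1 else 0) = fabc (r 0) (r 1) (r 2 - 1) := by
  simp [fP]

lemma payoff_add_sum (p : Fin 3 → ℝ) (r : Fin 3 → ℕ) :
    P3.payoff p + ∑ u, p u * fP (fun w => r w - if w = u then 1 else 0)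
      = Eexp (r 0) (r 1) (r 2) (p 0) (p 1) (p 2) := by
  rw [P3_payoff, Fin.sum_univ_three, fP_sub0, fP_sub1, fP_sub2, Eexp]
  ring

lemma sub_sum_le (r : Fin 3 → ℕ) (u : Fin 3) (n : ℕ) (hr : ∑ w, r w ≤ n + 1)
    (hu : r u ≠ 0) : ∑ w, (r w - if w = u then 1 else 0) ≤ n := by
  rw [Fin.sum_univ_three] at hr ⊢
  fin_cases u <;> simp at hu ⊢ <;> omega

lemma not_all_zero (r : Fin 3 → ℕ) (hz : ¬ ∀ u, r u = 0) :
    ¬ (r 0 = 0 ∧ r 1 = 0 ∧ r 2 = 0) := by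
  rintro ⟨h0, h1, h2⟩
  exact hz fun u => by fin_cases u <;> assumption

/- ### valueAux = fP ### -/

lemma exists_good_p (r : Fin 3 → ℕ) (hz' : ¬ (r 0 = 0 ∧ r 1 = 0 ∧ r 2 = 0)) :
    ∃ p : Fin 3 → ℝ, (∀ u, 0 ≤ p u) ∧ (∑ u, p u = 1) ∧ (∀ u, p u ≠ 0 → r u ≠ 0) ∧
      Eexp (r 0) (r 1) (r 2) (p 0) (p 1) (p 2) = fP r := by
  by_cases h2 : r 2 = 0
  · by_cases h0 : r 0 = 0
    · have h1 : r 1 ≠ 0 := fun h => hz' ⟨h0, h, h2⟩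
      refine ⟨![0, 1, 0], ?_, ?_, ?_, ?_⟩
      · intro u; fin_cases u <;> norm_num
      · rw [Fin.sum_univ_three]; norm_num [Matrix.cons_val_two]
      · intro u hu; fin_cases u <;> simp at hu ⊢ <;> try exact h1
      · exact core_eq_boring _ _ _ _ _ _ (by norm_num [Matrix.cons_val_two]) (by norm_num [Matrix.cons_val_two]) (by norm_num [Matrix.cons_val_two])
          (by norm_num [Matrix.cons_val_two]) (fun _ => by norm_num [Matrix.cons_val_two]) (fun h => absurd ⟨h0, h, h2⟩ hz')
          (fun _ => by norm_num [Matrix.cons_val_two]) hz' (Or.inl h2)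
    · refine ⟨![1, 0, 0], ?_, ?_, ?_, ?_⟩
      · intro u; fin_cases u <;> norm_num
      · rw [Fin.sum_univ_three]; norm_num [Matrix.cons_val_two]
      · intro u hu; fin_cases u <;> simp at hu ⊢ <;> try exact h0
      · exact core_eq_boring _ _ _ _ _ _ (by norm_num [Matrix.cons_val_two]) (by norm_num [Matrix.cons_val_two]) (by norm_num [Matrix.cons_val_two])
          (by norm_num [Matrix.cons_val_two]) (fun h => absurd h h0) (fun _ => by norm_num [Matrix.cons_val_two])
          (fun _ => by norm_num [Matrix.cons_val_two]) hz' (Or.inl h2)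
  · by_cases hs : r 0 = 0 ∧ r 1 = 0
    · refine ⟨![0, 0, 1], ?_, ?_, ?_, ?_⟩
      · intro u; fin_cases u <;> norm_num
      · rw [Fin.sum_univ_three]; norm_num [Matrix.cons_val_two]
      · intro u hu; fin_cases u <;> simp at hu ⊢ <;> try exact h2
      · exact core_eq_boring _ _ _ _ _ _ (by norm_num [Matrix.cons_val_two]) (by norm_num [Matrix.cons_val_two]) (by norm_num [Matrix.cons_val_two])
          (by norm_num [Matrix.cons_val_two]) (fun _ => by norm_num [Matrix.cons_val_two]) (fun _ => by norm_num [Matrix.cons_val_two])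
          (fun h => absurd h h2) hz' (Or.inr (by omega))
    · by_cases h0 : r 0 = 0
      · have h1 : r 1 ≠ 0 := fun h => hs ⟨h0, h⟩
        refine ⟨![0, 1/2, 1/2], ?_, ?_, ?_, ?_⟩
        · intro u; fin_cases u <;> norm_num
        · rw [Fin.sum_univ_three]; norm_num [Matrix.cons_val_two]
        · intro u hu; fin_cases u <;> simp at hu ⊢ <;> first | exact h1 | exact h2
        · refine (core_main _ _ _ _ _ _ (by norm_num [Matrix.cons_val_two]) (by norm_num [Matrix.cons_val_two]) (by norm_num [Matrix.cons_val_two])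
            (by norm_num [Matrix.cons_val_two]) (fun _ => by norm_num [Matrix.cons_val_two]) (fun h => absurd h h1)
            (fun h => absurd h h2) h2 (by omega)).2 (by norm_num [Matrix.cons_val_two])
      · refine ⟨![1/2, 0, 1/2], ?_, ?_, ?_, ?_⟩
        · intro u; fin_cases u <;> norm_num
        · rw [Fin.sum_univ_three]; norm_num [Matrix.cons_val_two]
        · intro u hu; fin_cases u <;> simp at hu ⊢ <;> first | exact h0 | exact h2
        · refine (core_main _ _ _ _ _ _ (by norm_num [Matrix.cons_val_two]) (by norm_num [Matrix.cons_val_two]) (by norm_num [Matrix.cons_val_two])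
            (by norm_num [Matrix.cons_val_two]) (fun h => absurd h h0) (fun _ => by norm_num [Matrix.cons_val_two])
            (fun h => absurd h h2) h2 (by omega)).2 (by norm_num [Matrix.cons_val_two])



lemma valueAux_eq : ∀ n (r : Fin 3 → ℕ), (∑ u, r u) ≤ n → P3.valueAux n r = fP r := by
  intro n
  induction n with
  | zero =>
    intro r hr
    have hz : ∀ u, r u = 0 := by
      rw [Fin.sum_univ_three] at hr
      have h3 : r 0 = 0 ∧ r 1 = 0 ∧ r 2 = 0 := by omega
      intro u; fin_cases u
      · exact h3.1
      · exact h3.2.1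
      · exact h3.2.2
    rw [fP_zero r hz]
    simp [Digraph'.valueAux]
  | succ n ih =>
    intro r hr
    by_cases hz : ∀ u, r u = 0
    · rw [fP_zero r hz]
      simp [Digraph'.valueAux, hz]
    · have hz' := not_all_zero r hz
      have hEp : ∀ p : Fin 3 → ℝ, (∀ u, 0 ≤ p u) → (∑ u, p u = 1) →
          (∀ u, p u ≠ 0 → r u ≠ 0) →
          P3.payoff p + ∑ u, p u * P3.valueAux n (fun w => r w - if w = u then 1 else 0)
            = Eexp (r 0) (r 1) (r 2) (p 0) (p 1) (p 2) := by
        intro p hp0 hp1 hp2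
        rw [← payoff_add_sum p r]
        congr 1
        refine Finset.sum_congr rfl fun u _ => ?_
        by_cases h : p u = 0
        · rw [h]; ring
        · rw [ih _ (sub_sum_le r u n hr (hp2 u h))]
      rw [Digraph'.valueAux, if_neg hz]
      -- choose the witness p
      obtain ⟨p, hp0, hp1, hp2, hpe⟩ := exists_good_p r hz'
      have hmem : fP r ∈ { x : ℝ | ∃ p : Fin 3 → ℝ, (∀ u, 0 ≤ p u) ∧ (∑ u, p u = 1) ∧
          (∀ u, p u ≠ 0 → r u ≠ 0) ∧
          x = P3.payoff p + ∑ u, p u * P3.valueAux n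
            (fun w => r w - if w = u then 1 else 0) } :=
        ⟨p, hp0, hp1, hp2, by rw [hEp p hp0 hp1 hp2, hpe]⟩
      have hlb : ∀ x ∈ { x : ℝ | ∃ p : Fin 3 → ℝ, (∀ u, 0 ≤ p u) ∧ (∑ u, p u = 1) ∧
          (∀ u, p u ≠ 0 → r u ≠ 0) ∧
          x = P3.payoff p + ∑ u, p u * P3.valueAux n
            (fun w => r w - if w = u then 1 else 0) }, fP r ≤ x := by
        rintro x ⟨q, hq0, hq1, hq2, rfl⟩
        rw [hEp q hq0 hq1 hq2]
        have hq1' : q 0 + q 1 + q 2 = 1 := by rw [Fin.sum_univ_three] at hq1; linarith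
        exact core_ge _ _ _ _ _ _ (hq0 0) (hq0 1) (hq0 2) hq1'
          (fun h => by_contra fun hne => hq2 0 hne h)
          (fun h => by_contra fun hne => hq2 1 hne h)
          (fun h => by_contra fun hne => hq2 2 hne h) hz'
      exact le_antisymm (csInf_le ⟨fP r, fun x hx => hlb x hx⟩ hmem) (le_csInf ⟨_, hmem⟩ hlb)

lemma value_eq (r : Fin 3 → ℕ) : P3.value r = fP r := valueAux_eq _ r le_rfl

/- ### strategy value lemmas ### -/

lemma stratValueAux_fuel (R : ReiStrategy P3) :
    ∀ n m (r : Fin 3 → ℕ), (∑ u, r u) ≤ n → (∑ u, r u) ≤ m →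
      P3.stratValueAux R n r = P3.stratValueAux R m r := by
  intro n
  induction n with
  | zero =>
    intro m r hn hm
    have hz : ∀ u, r u = 0 := by
      rw [Fin.sum_univ_three] at hn
      have h3 : r 0 = 0 ∧ r 1 = 0 ∧ r 2 = 0 := by omega
      intro u; fin_cases u
      · exact h3.1
      · exact h3.2.1
      · exact h3.2.2
    cases m <;> simp [Digraph'.stratValueAux, hz]
  | succ n ih =>
    intro m r hn hm
    by_cases hz : ∀ u, r u = 0
    · cases m <;> simp [Digraph'.stratValueAux, hz]
    · have hpos : 1 ≤ ∑ u, r u := by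
        rcases not_forall.1 hz with ⟨u, hu⟩
        calc 1 ≤ r u := by omega
        _ ≤ ∑ w, r w := Finset.single_le_sum (fun w _ => Nat.zero_le _) (Finset.mem_univ u)
      obtain ⟨m', rfl⟩ : ∃ m', m = m' + 1 := ⟨m - 1, by omega⟩
      rw [Digraph'.stratValueAux, Digraph'.stratValueAux, if_neg hz, if_neg hz]
      congr 1
      refine Finset.sum_congr rfl fun u _ => ?_
      by_cases h : R.play r u = 0
      · rw [h]; ring
      · have hu := R.supp r hz u h
        rw [ih m' _ (sub_sum_le r u n hn (R.supp r hz u h))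
          (sub_sum_le r u m' hm (R.supp r hz u h))]

lemma stratValue_unfold (R : ReiStrategy P3) (r : Fin 3 → ℕ) (hz : ¬ ∀ u, r u = 0) :
    P3.stratValue R r = P3.payoff (R.play r) + ∑ u, R.play r u *
      P3.stratValue R (fun w => r w - if w = u then 1 else 0) := by
  have hpos : 1 ≤ ∑ u, r u := by
    rcases not_forall.1 hz with ⟨u, hu⟩
    calc 1 ≤ r u := by omega
    _ ≤ ∑ w, r w := Finset.single_le_sum (fun w _ => Nat.zero_le _) (Finset.mem_univ u)
  obtain ⟨k, hk⟩ : ∃ k, ∑ u, r u = k + 1 := ⟨(∑ u, r u) - 1, by omega⟩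
  rw [Digraph'.stratValue, hk, Digraph'.stratValueAux, if_neg hz]
  congr 1
  refine Finset.sum_congr rfl fun u _ => ?_
  by_cases h : R.play r u = 0
  · rw [h]; ring
  · rw [Digraph'.stratValue, stratValueAux_fuel R k _ _
      (sub_sum_le r u k (by omega) (R.supp r hz u h)) le_rfl]

/- ### strat value vs fP ### -/

lemma strat_play_valid (R : ReiStrategy P3) (r : Fin 3 → ℕ) (hz : ¬ ∀ u, r u = 0) :
    R.play r 0 + R.play r 1 + R.play r 2 = 1 := by
  have := R.sum_one r hz
  rw [Fin.sum_univ_three] at this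
  linarith

lemma strat_eq_of_half (R : ReiStrategy P3)
    (hyp : ∀ r : Fin 3 → ℕ, r 2 ≠ 0 → (r 0 ≠ 0 ∨ r 1 ≠ 0) → R.play r 2 = 1/2) :
    ∀ n (r : Fin 3 → ℕ), (∑ u, r u) ≤ n → P3.stratValue R r = fP r := by
  intro n
  induction n with
  | zero =>
    intro r hr
    have hz : ∀ u, r u = 0 := by
      rw [Fin.sum_univ_three] at hr
      have h3 : r 0 = 0 ∧ r 1 = 0 ∧ r 2 = 0 := by omega
      intro u; fin_cases u
      · exact h3.1
      · exact h3.2.1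
      · exact h3.2.2
    rw [fP_zero r hz, Digraph'.stratValue,
      show (∑ u, r u) = 0 from by rw [Fin.sum_univ_three, hz 0, hz 1, hz 2]]
    rfl
  | succ n ih =>
    intro r hr
    by_cases hz : ∀ u, r u = 0
    · rw [fP_zero r hz, Digraph'.stratValue,
        show (∑ u, r u) = 0 from by rw [Fin.sum_univ_three, hz 0, hz 1, hz 2]]
      rfl
    · rw [stratValue_unfold R r hz]
      have hterm : ∀ u : Fin 3, R.play r u * P3.stratValue R
          (fun w => r w - if w = u then 1 else 0)
          = R.play r u * fP (fun w => r w - if w = u then 1 else 0) := by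
        intro u
        by_cases h : R.play r u = 0
        · rw [h]; ring
        · rw [ih _ (sub_sum_le r u n hr (R.supp r hz u h))]
      rw [Finset.sum_congr rfl fun u _ => hterm u, payoff_add_sum]
      set p := R.play r with hp
      have hp0 := R.nonneg r hz
      have hps := strat_play_valid R r hz
      have hsupp := R.supp r hz
      have ha : r 0 = 0 → p 0 = 0 := fun h => by_contra fun hne => hsupp 0 hne h
      have hb : r 1 = 0 → p 1 = 0 := fun h => by_contra fun hne => hsupp 1 hne h
      have hc : r 2 = 0 → p 2 = 0 := fun h => by_contra fun hne => hsupp 2 hne h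
      have hz' := not_all_zero r hz
      show Eexp (r 0) (r 1) (r 2) (p 0) (p 1) (p 2) = fP r
      by_cases h2 : r 2 = 0
      · exact core_eq_boring _ _ _ _ _ _ (hp0 0) (hp0 1) (hp0 2) hps ha hb hc hz' (Or.inl h2)
      · by_cases hs : r 0 + r 1 = 0
        · exact core_eq_boring _ _ _ _ _ _ (hp0 0) (hp0 1) (hp0 2) hps ha hb hc hz' (Or.inr hs)
        · refine (core_main _ _ _ _ _ _ (hp0 0) (hp0 1) (hp0 2) hps ha hb hc h2 hs).2 ?_
          exact hyp r h2 (by omega)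

theorem path3_optimal_iff (R : ReiStrategy P3) :
    P3.IsOptimal R ↔
      ∀ r : Fin 3 → ℕ, r 2 ≠ 0 → (r 0 ≠ 0 ∨ r 1 ≠ 0) → R.play r 2 = 1 / 2 := by
  constructor
  · intro hOpt r h2 h01
    have hz : ¬ ∀ u, r u = 0 := fun h => h2 (h 2)
    have hval : ∀ r' : Fin 3 → ℕ, P3.stratValue R r' = fP r' :=
      fun r' => (hOpt r').trans (value_eq r')
    have hstep := stratValue_unfold R r hz
    rw [hval r, Finset.sum_congr rfl fun u _ => by rw [hval]] at hstep
    rw [payoff_add_sum] at hstep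
    have hp0 := R.nonneg r hz
    have hps := strat_play_valid R r hz
    have hsupp := R.supp r hz
    have ha : r 0 = 0 → R.play r 0 = 0 := fun h => by_contra fun hne => hsupp 0 hne h
    have hb : r 1 = 0 → R.play r 1 = 0 := fun h => by_contra fun hne => hsupp 1 hne h
    have hc : r 2 = 0 → R.play r 2 = 0 := fun h => by_contra fun hne => hsupp 2 hne h
    have := (core_iff (r 0) (r 1) (r 2) (R.play r 0) (R.play r 1) (R.play r 2)
      (hp0 0) (hp0 1) (hp0 2) hps ha hb hc h2 (by omega)).1 hstep.symm
    linarith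
  · intro hyp r
    rw [value_eq r]
    exact strat_eq_of_half R hyp (∑ u, r u) r le_rfl
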